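/- Let P be a finite poset of width two on n elements and let x ∈ X. The sequence q(i) := #{linear extensions L of P : L(x) = i} has interval support: if q(i) > 0 and q(k) > 0 for some i ≤ j ≤ k, then q(j) > 0. -/
import Mathlib

lemma swap_adj_lt_iff {n : ℕ} {p p1 : Fin n} (h : (p:ℕ)+1 = (p1:ℕ)) (q r : Fin n) :
    Equiv.swap p p1 q < Equiv.swap p p1 r ↔
      ((q < r ∧ ¬(q = p ∧ r = p1)) ∨ (q = p1 ∧ r = p)) := by
  simp only [Equiv.swap_apply_def, Fin.lt_def, Fin.ext_iff]
  split_ifs <;> omega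

open Classical in
/-- The set of inversions between two bijections to `Fin n`. -/
noncomputable def invS {X : Type*} [Fintype X] [PartialOrder X]
    (L M : X ≃ Fin (Fintype.card X)) : Finset (X × X) :=
  Finset.univ.filter (fun p => L p.1 < L p.2 ∧ M p.2 < M p.1)

/-- If there are no inversions between `L` and `M`, they are equal. -/
lemma eq_of_invS_empty {X : Type*} [Fintype X] [PartialOrder X]
    {L M : X ≃ Fin (Fintype.card X)} (h : invS L M = ∅) : L = M := by
  classical
  have key : StrictMono (fun p : Fin (Fintype.card X) => M (L.symm p)) := by
    intro q r hqr
    have hL : L (L.symm q) < L (L.symm r) := by simpa using hqr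
    have hne : L.symm q ≠ L.symm r := fun he => absurd (congrArg L he) (by simp; omega)
    have hnotin : (L.symm q, L.symm r) ∉ invS L M := by simp [h]
    simp only [invS, Finset.mem_filter, Finset.mem_univ, true_and, not_and] at hnotin
    rcases lt_trichotomy (M (L.symm q)) (M (L.symm r)) with h1 | h1 | h1
    · exact h1
    · exact absurd (M.injective (by simpa using h1)) hne
    · exact absurd h1 (hnotin hL)
  have hsurj : Function.Surjective (fun p : Fin (Fintype.card X) => M (L.symm p)) :=
    (L.symm.trans M).surjective
  have he : ∀ p, M (L.symm p) = p := by
    intro p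
    have := Fin.coe_orderIso_apply (StrictMono.orderIsoOfSurjective _ key hsurj) p
    exact Fin.ext (by simpa using this)
  ext a
  have h2 := he (L a)
  rw [Equiv.symm_apply_apply] at h2
  exact congrArg Fin.val h2.symm

lemma main_lemma {X : Type*} [Fintype X] [PartialOrder X] :
    ∀ (N : ℕ) (L M : X ≃ Fin (Fintype.card X)), (invS L M).card ≤ N →
    (∀ u v : X, u < v → L u < L v) → (∀ u v : X, u < v → M u < M v) →
    ∀ (x : X) (j : ℕ), (L x : ℕ) ≤ j → j ≤ (M x : ℕ) →
    ∃ K : X ≃ Fin (Fintype.card X), (∀ u v : X, u < v → K u < K v) ∧ (K x : ℕ) = j := by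
  classical
  intro N
  induction N with
  | zero =>
    intro L M hcard hL hM x j h1 h2
    have : invS L M = ∅ := Finset.card_eq_zero.mp (Nat.le_zero.mp hcard)
    have hLM := eq_of_invS_empty this
    subst hLM
    exact ⟨L, hL, le_antisymm h1 h2⟩
  | succ N ih =>
    intro L M hcard hL hM x j h1 h2
    by_cases hxj : (L x : ℕ) = j
    · exact ⟨L, hL, hxj⟩
    have hLx : (L x : ℕ) < j := lt_of_le_of_ne h1 hxj
    have hLM : L ≠ M := by
      intro he; subst he; omega
    -- there must be an adjacent descent: positions p, p+1 with M(L⁻¹ p) > M(L⁻¹(p+1))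
    have hdesc : ∃ p p1 : Fin (Fintype.card X), (p:ℕ)+1 = (p1:ℕ) ∧
        M (L.symm p1) < M (L.symm p) := by
      by_contra hc
      push_neg at hc
      apply hLM
      apply eq_of_invS_empty
      have mono : ∀ q r : Fin (Fintype.card X), q < r → M (L.symm q) < M (L.symm r) := by
        have step : ∀ d c : ℕ, (hc2 : c + d < Fintype.card X) →
            M (L.symm ⟨c, by omega⟩) ≤ M (L.symm ⟨c + d, hc2⟩) := by
          intro d
          induction d with
          | zero => intro c hc2; simp
          | succ d ihd =>
            intro c hc2
            have h3 : c + d < Fintype.card X := by omega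
            exact le_trans (ihd c h3) (hc ⟨c + d, h3⟩ ⟨c + d + 1, by omega⟩ rfl)
        intro q r hqr
        have hq : (q:ℕ) < Fintype.card X := q.isLt
        have hr : (r:ℕ) < Fintype.card X := r.isLt
        have hqr' : (q:ℕ) < (r:ℕ) := hqr
        have h5 := step ((r:ℕ) - q) q (by omega)
        have h6 : (⟨(q:ℕ) + ((r:ℕ) - q), by omega⟩ : Fin (Fintype.card X)) = r := by
          apply Fin.ext; simp; omega
        have h7 : (⟨(q:ℕ), by omega⟩ : Fin (Fintype.card X)) = q := by apply Fin.ext; simp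
        rw [h6, h7] at h5
        rcases lt_or_eq_of_le h5 with h8 | h8
        · exact h8
        · exact absurd (congrArg Fin.val (L.symm.injective (M.injective h8))) (by omega)
      ext1 ⟨a, b⟩
      simp only [invS, Finset.mem_filter, Finset.mem_univ, true_and, Finset.notMem_empty,
        iff_false, not_and]
      intro hab
      have := mono (L a) (L b) hab
      simp only [Equiv.symm_apply_apply] at this
      omega
    obtain ⟨p, p1, hp, hdesc⟩ := hdesc
    set u := L.symm p with hu
    set v := L.symm p1 with hv
    set L' : X ≃ Fin (Fintype.card X) := L.trans (Equiv.swap p p1) with hL'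
    have hL'app : ∀ a : X, L' a = Equiv.swap p p1 (L a) := fun a => rfl
    -- L' is a linear extension
    have hextL' : ∀ a b : X, a < b → L' a < L' b := by
      intro a b hab
      rw [hL'app, hL'app, swap_adj_lt_iff hp]
      left
      refine ⟨hL a b hab, ?_⟩
      rintro ⟨ha, hb⟩
      have ha' : a = u := by rw [hu, ← ha]; simp
      have hb' : b = v := by rw [hv, ← hb]; simp
      rw [ha', hb'] at hab
      exact absurd (hM u v hab) (asymm hdesc)
    -- inversions strictly decrease
    have hsub : invS L' M ⊆ (invS L M).erase (u, v) := by
      rintro ⟨a, b⟩ hmem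
      simp only [invS, Finset.mem_filter, Finset.mem_univ, true_and] at hmem
      obtain ⟨hlt, hM2⟩ := hmem
      rw [hL'app, hL'app, swap_adj_lt_iff hp] at hlt
      rcases hlt with ⟨hab, hne2⟩ | ⟨ha, hb⟩
      · rw [Finset.mem_erase]
        constructor
        · intro he
          apply hne2
          have he1 : a = u := congrArg Prod.fst he
          have he2 : b = v := congrArg Prod.snd he
          constructor
          · rw [he1, hu, Equiv.apply_symm_apply]
          · rw [he2, hv, Equiv.apply_symm_apply]
        · simp only [invS, Finset.mem_filter, Finset.mem_univ, true_and]
          exact ⟨hab, hM2⟩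
      · exfalso
        have ha' : a = v := by rw [hv, ← ha]; simp
        have hb' : b = u := by rw [hu, ← hb]; simp
        rw [ha', hb'] at hM2
        exact absurd hM2 (asymm hdesc)
    have huv_mem : (u, v) ∈ invS L M := by
      simp only [invS, Finset.mem_filter, Finset.mem_univ, true_and]
      refine ⟨?_, hdesc⟩
      rw [hu, hv]
      simp only [Equiv.apply_symm_apply]
      exact Fin.lt_def.mpr (by omega)
    have hcard' : (invS L' M).card ≤ N := by
      have hc1 := Finset.card_le_card hsub
      have hc2 := Finset.card_erase_of_mem huv_mem
      omega
    have hL'x : (L' x : ℕ) ≤ j := by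
      rw [hL'app]
      rcases eq_or_ne (L x) p with he | he
      · rw [he, Equiv.swap_apply_left]; omega
      rcases eq_or_ne (L x) p1 with he2 | he2
      · rw [he2, Equiv.swap_apply_right]; omega
      · rw [Equiv.swap_apply_of_ne_of_ne he he2]; omega
    exact ih L' M hcard' hextL' hM x j hL'x h2


/-- The number of linear extensions `L` of the finite poset `X` (bijections onto
`{1,…,n}` preserving the strict order) with `L(x) = i` (values taken 1-based). -/
noncomputable def qvec {X : Type*} [Fintype X] [PartialOrder X] (x : X) (i : ℕ) : ℕ :=
  Nat.card {L : X ≃ Fin (Fintype.card X) //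
    (∀ u v : X, u < v → L u < L v) ∧ (L x : ℕ) + 1 = i}

/-- For a poset of width two, the sequence `q(i) = #{L : L(x) = i}` has interval
support. -/
theorem qvec_interval_support {X : Type*} [Fintype X] [PartialOrder X]
    (hwidth : ∀ s : Finset X, IsAntichain (· ≤ ·) (s : Set X) → s.card ≤ 2)
    (x : X) (i j k : ℕ) (hij : i ≤ j) (hjk : j ≤ k)
    (hi : 0 < qvec x i) (hk : 0 < qvec x k) :
    0 < qvec x j := by
  rw [qvec, Nat.card_pos_iff] at hi hk ⊢
  obtain ⟨⟨⟨L, hLext, hLx⟩⟩, -⟩ := hi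
  obtain ⟨⟨⟨M, hMext, hMx⟩⟩, -⟩ := hk
  refine ⟨?_, Subtype.finite⟩
  obtain ⟨K, hKext, hKx⟩ := main_lemma (invS L M).card L M le_rfl hLext hMext x (j - 1)
    (by omega) (by omega)
  exact ⟨⟨K, hKext, by omega⟩⟩
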